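/- (Erdős 1964, graph case) For every r ≥ 2 and ε > 0 there exists δ > 0 such that for all sufficiently large n: every graph G on n vertices containing at least ε·n^r copies of K_r contains a copy of the complete r-partite graph with all r parts of size ⌊δ(log n)^{1/(r-1)}⌋. -/

import Mathlib

open SimpleGraph Finset
open scoped Classical

/-- `H` is contained in `G` as a (not necessarily induced) subgraph. -/
def Contains {α β : Type*} (H : SimpleGraph α) (G : SimpleGraph β) : Prop :=
  ∃ f : H →g G, Function.Injective f

noncomputable def cnt {n : ℕ} (G : SimpleGraph (Fin n)) (r : ℕ) (W : Finset (Fin n)) : ℕ :=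
  ((W.powersetCard r).filter (fun S : Finset (Fin n) => G.IsClique (S : Set (Fin n)))).card

lemma chooseRatio (a n m : ℕ) :
    ((a + 1 - m : ℕ) : ℝ)^m * (n.choose m : ℝ) ≤ (a.choose m : ℝ) * (n : ℝ)^m := by
  have h1 : (((a + 1 - m : ℕ) : ℝ))^m ≤ (a.choose m : ℝ) * (m.factorial : ℝ) := by
    have := Nat.pow_le_choose (α := ℝ) m a
    have hf : (0:ℝ) < (m.factorial : ℝ) := by exact_mod_cast m.factorial_pos
    rw [div_le_iff₀ hf] at this
    exact this
  have h2 : (n.choose m : ℝ) * (m.factorial : ℝ) ≤ (n:ℝ)^m := by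
    have := Nat.choose_le_pow_div (α := ℝ) m n
    have hf : (0:ℝ) < (m.factorial : ℝ) := by exact_mod_cast m.factorial_pos
    rw [le_div_iff₀ hf] at this
    calc (n.choose m : ℝ) * (m.factorial : ℝ) ≤ ((n^m : ℕ):ℝ) := by push_cast at this ⊢; linarith
    _ = (n:ℝ)^m := by push_cast; ring
  have hc : (0:ℝ) ≤ (n.choose m : ℝ) := by positivity
  have hp : (0:ℝ) ≤ (((a + 1 - m : ℕ) : ℝ))^m := by positivity
  have hf : (0:ℝ) < (m.factorial : ℝ) := by exact_mod_cast m.factorial_pos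
  nlinarith [mul_le_mul_of_nonneg_right h1 hc]

lemma sumA {n : ℕ} (G : SimpleGraph (Fin n)) (W : Finset (Fin n)) (k : ℕ) (hn : 0 < n) :
    cnt G (k+1) W ≤ ∑ K ∈ (W.powersetCard k).filter (fun S : Finset (Fin n) => G.IsClique (S : Set (Fin n))),
      (W.filter (fun v => ∀ x ∈ K, G.Adj v x)).card := by
  classical
  rw [← Finset.card_sigma]
  show ((W.powersetCard (k+1)).filter (fun S : Finset (Fin n) => G.IsClique (S : Set (Fin n)))).card ≤ _
  apply Finset.card_le_card_of_injOn
    (fun S : Finset (Fin n) =>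
      if h : S.Nonempty then ⟨S.erase (S.min' h), S.min' h⟩ else ⟨∅, ⟨0, hn⟩⟩)
  · intro S hS
    simp only [mem_coe, mem_filter, mem_powersetCard] at hS
    obtain ⟨⟨hSW, hScard⟩, hScl⟩ := hS
    have hne : S.Nonempty := by rw [← Finset.card_pos, hScard]; omega
    beta_reduce
    rw [dif_pos hne]
    have hmin := S.min'_mem hne
    simp only [mem_coe, mem_sigma, mem_filter, mem_powersetCard]
    refine ⟨⟨⟨(S.erase_subset _).trans hSW, ?_⟩, ?_⟩, hSW hmin, ?_⟩
    · rw [Finset.card_erase_of_mem hmin, hScard]; omega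
    · exact hScl.subset (by exact_mod_cast Finset.erase_subset _ _)
    · intro x hx
      exact hScl hmin (Finset.mem_of_mem_erase hx) (Finset.ne_of_mem_erase hx).symm
  · intro S hS S' hS' heq
    simp only [mem_coe, mem_filter, mem_powersetCard] at hS hS'
    have hne : S.Nonempty := by rw [← Finset.card_pos, hS.1.2]; omega
    have hne' : S'.Nonempty := by rw [← Finset.card_pos, hS'.1.2]; omega
    simp only [dif_pos hne, dif_pos hne'] at heq
    obtain ⟨h1, h2⟩ := Sigma.mk.inj_iff.1 heq
    rw [heq_iff_eq] at h2
    calc S = insert (S.min' hne) (S.erase (S.min' hne)) :=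
          (Finset.insert_erase (S.min'_mem hne)).symm
      _ = insert (S'.min' hne') (S'.erase (S'.min' hne')) := by rw [h1, h2]
      _ = S' := Finset.insert_erase (S'.min'_mem hne')

lemma sumB {n : ℕ} (G : SimpleGraph (Fin n)) (W : Finset (Fin n)) (k m : ℕ) :
    ∑ K ∈ (W.powersetCard k).filter (fun S : Finset (Fin n) => G.IsClique (S : Set (Fin n))),
        ((W.filter (fun v => ∀ x ∈ K, G.Adj v x)).card).choose m
      = ∑ T ∈ W.powersetCard m,
        (((W.powersetCard k).filter (fun S : Finset (Fin n) => G.IsClique (S : Set (Fin n)))).filter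
          (fun K => ∀ t ∈ T, ∀ x ∈ K, G.Adj t x)).card := by
  classical
  have lhs : ∑ K ∈ (W.powersetCard k).filter (fun S : Finset (Fin n) => G.IsClique (S : Set (Fin n))),
        ((W.filter (fun v => ∀ x ∈ K, G.Adj v x)).card).choose m
      = (((W.powersetCard k).filter (fun S : Finset (Fin n) => G.IsClique (S : Set (Fin n)))).sigma
          (fun K => (W.filter (fun v => ∀ x ∈ K, G.Adj v x)).powersetCard m)).card := by
    rw [Finset.card_sigma]
    exact Finset.sum_congr rfl (fun K _ => (Finset.card_powersetCard _ _).symm)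
  have rhs : ∑ T ∈ W.powersetCard m,
        (((W.powersetCard k).filter (fun S : Finset (Fin n) => G.IsClique (S : Set (Fin n)))).filter
          (fun K => ∀ t ∈ T, ∀ x ∈ K, G.Adj t x)).card
      = ((W.powersetCard m).sigma (fun T =>
          ((W.powersetCard k).filter (fun S : Finset (Fin n) => G.IsClique (S : Set (Fin n)))).filter
            (fun K => ∀ t ∈ T, ∀ x ∈ K, G.Adj t x))).card := by
    rw [Finset.card_sigma]
  rw [lhs, rhs]
  apply Finset.card_bij (fun a _ => (⟨a.2, a.1⟩ : (_ : Finset (Fin n)) × Finset (Fin n)))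
  · rintro ⟨K, T⟩ ha
    simp only [mem_sigma, mem_filter, mem_powersetCard] at ha ⊢
    obtain ⟨⟨⟨hKW, hKcard⟩, hKcl⟩, hTsub, hTcard⟩ := ha
    refine ⟨⟨(fun t ht => (Finset.mem_filter.1 (hTsub ht)).1), hTcard⟩,
      ⟨⟨hKW, hKcard⟩, hKcl⟩, ?_⟩
    intro t ht x hx
    exact (Finset.mem_filter.1 (hTsub ht)).2 x hx
  · rintro ⟨K, T⟩ ha ⟨K', T'⟩ ha' h
    simp only [Sigma.mk.inj_iff, heq_iff_eq] at h
    obtain ⟨h1, h2⟩ := h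
    simp [h1, h2]
  · rintro ⟨T, K⟩ hb
    simp only [mem_sigma, mem_filter, mem_powersetCard] at hb
    obtain ⟨⟨hTW, hTcard⟩, ⟨⟨hKW, hKcard⟩, hKcl⟩, hadj⟩ := hb
    refine ⟨⟨K, T⟩, ?_, rfl⟩
    simp only [mem_sigma, mem_filter, mem_powersetCard]
    exact ⟨⟨⟨hKW, hKcard⟩, hKcl⟩, fun t ht => Finset.mem_filter.2 ⟨hTW ht, fun x hx => hadj t ht x hx⟩, hTcard⟩

set_option maxHeartbeats 2000000 in
lemma core (p : ℕ) : ∀ {n : ℕ} (G : SimpleGraph (Fin n)) (W : Finset (Fin n)) (β : ℝ) (m : ℕ),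
    0 < β → β ≤ 1 → 1 ≤ m →
    4 * (m : ℝ) ≤ (β/4)^((m+2)^p) * n →
    β * (n : ℝ)^(p+1) ≤ (cnt G (p+1) W : ℝ) →
    ∃ A : Fin (p+1) → Finset (Fin n), (∀ i, A i ⊆ W) ∧ (∀ i, (A i).card = m) ∧
      ∀ i j, i ≠ j → ∀ x ∈ A i, ∀ y ∈ A j, G.Adj x y := by
  induction p with
  | zero =>
    intro n G W β m hβ0 hβ1 hm1 h4 hc
    have hn0 : (0:ℝ) ≤ n := Nat.cast_nonneg n
    have hcnt_le : (cnt G 1 W : ℝ) ≤ (W.card : ℝ) := by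
      have : cnt G 1 W ≤ (W.powersetCard 1).card := Finset.card_filter_le _ _
      rw [Finset.card_powersetCard, Nat.choose_one_right] at this
      exact_mod_cast this
    have hmW : (m:ℝ) ≤ (W.card : ℝ) := by
      have h1 : (m:ℝ) ≤ 4*m := by push_cast; nlinarith [Nat.cast_nonneg (α := ℝ) m]
      have h2 : (β/4)^((m+2)^0) * n ≤ β * n := by
        rw [pow_zero, pow_one]; nlinarith
      have h3 : β * n ≤ β * (n:ℝ)^(0+1) := by norm_num
      linarith
    obtain ⟨T, hTW, hTcard⟩ := Finset.exists_subset_card_eq (by exact_mod_cast hmW :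
      m ≤ W.card)
    refine ⟨fun _ => T, fun _ => hTW, fun _ => hTcard, fun i j hij => ?_⟩
    exact absurd (by omega : i = j) hij
  | succ p ih =>
    intro n G W β m hβ0 hβ1 hm1 h4 hc
    classical
    -- notation
    have hb4 : (0:ℝ) < β/4 := by linarith
    have hb41 : β/4 ≤ 1 := by linarith
    have hE1 : 1 ≤ (m+2)^(p+1) := Nat.one_le_pow _ _ (by omega)
    have hpowle : (β/4)^((m+2)^(p+1)) ≤ β/4 := by
      calc (β/4)^((m+2)^(p+1)) ≤ (β/4)^1 := pow_le_pow_of_le_one hb4.le hb41 hE1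
        _ = β/4 := pow_one _
    have hm1R : (1:ℝ) ≤ m := by exact_mod_cast hm1
    have hnn : (0:ℝ) ≤ n := Nat.cast_nonneg n
    have hn4 : (4:ℝ) ≤ n := by nlinarith
    have hn0 : (0:ℝ) < n := by linarith
    have hm4 : (m:ℝ) ≤ β*n/4 := by nlinarith
    set a : ℕ := ⌈β*n/2⌉₊ with ha
    have ha_lb : β*n/2 ≤ (a:ℝ) := Nat.le_ceil _
    have ha_ub : (a:ℝ) ≤ n := by
      have : a ≤ n := Nat.ceil_le.2 (by nlinarith)
      exact_mod_cast this
    have hma : m ≤ a := by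
      have : (m:ℝ) ≤ (a:ℝ) := by nlinarith
      exact_mod_cast this
    have hWn : (W.card : ℝ) ≤ n := by
      have := W.card_le_univ
      simp only [Finset.card_univ, Fintype.card_fin] at this
      exact_mod_cast this
    -- the (p+1)-cliques inside W
    have hQ1n : (((W.powersetCard (p+1)).filter
        (fun S : Finset (Fin n) => G.IsClique (S : Set (Fin n)))).card : ℝ) ≤ (n:ℝ)^(p+1) := by
      have h1 : ((W.powersetCard (p+1)).filter
          (fun S : Finset (Fin n) => G.IsClique (S : Set (Fin n)))).card
          ≤ (W.powersetCard (p+1)).card := Finset.card_filter_le _ _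
      rw [Finset.card_powersetCard] at h1
      have h2 : W.card.choose (p+1) ≤ n.choose (p+1) :=
        Nat.choose_le_choose _ (by exact_mod_cast hWn)
      have h3 : n.choose (p+1) ≤ n^(p+1) := Nat.choose_le_pow _ _
      calc (((W.powersetCard (p+1)).filter
          (fun S : Finset (Fin n) => G.IsClique (S : Set (Fin n)))).card : ℝ)
          ≤ ((n^(p+1) : ℕ) : ℝ) := by exact_mod_cast h1.trans (h2.trans h3)
        _ = (n:ℝ)^(p+1) := by push_cast; ring
    have hdn : ∀ K : Finset (Fin n),
        ((W.filter (fun v => ∀ x ∈ K, G.Adj v x)).card : ℝ) ≤ n := by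
      intro K
      exact le_trans (by exact_mod_cast Finset.card_filter_le _ _) hWn
    -- sum of degrees is large
    have hsum1 : β * (n:ℝ)^(p+2) ≤ ∑ K ∈ (W.powersetCard (p+1)).filter
        (fun S : Finset (Fin n) => G.IsClique (S : Set (Fin n))),
        ((W.filter (fun v => ∀ x ∈ K, G.Adj v x)).card : ℝ) := by
      have h1 := sumA G W (p+1) (Nat.cast_pos.mp hn0)
      have h2 : (cnt G (p+1+1) W : ℝ) ≤ ∑ K ∈ (W.powersetCard (p+1)).filter
          (fun S : Finset (Fin n) => G.IsClique (S : Set (Fin n))),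
          ((W.filter (fun v => ∀ x ∈ K, G.Adj v x)).card : ℝ) := by
        push_cast
        exact_mod_cast h1
      exact le_trans (by exact_mod_cast hc) h2
    -- many cliques have many common neighbours
    have hB1 : (β/2) * (n:ℝ)^(p+1) ≤ ((((W.powersetCard (p+1)).filter
        (fun S : Finset (Fin n) => G.IsClique (S : Set (Fin n)))).filter
        (fun K => a ≤ (W.filter (fun v => ∀ x ∈ K, G.Adj v x)).card)).card : ℝ) := by
      set dd : Finset (Fin n) → ℕ := fun K => (W.filter (fun v => ∀ x ∈ K, G.Adj v x)).card with hdd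
      set Q1 := (W.powersetCard (p+1)).filter
        (fun S : Finset (Fin n) => G.IsClique (S : Set (Fin n))) with hQ1def
      set B1 := Q1.filter (fun K => a ≤ dd K) with hB1def
      have hsplit : ∑ K ∈ Q1, ((dd K : ℕ) : ℝ)
          = (∑ K ∈ B1, ((dd K : ℕ) : ℝ))
          + ∑ K ∈ Q1.filter (fun K => ¬ a ≤ dd K), ((dd K : ℕ) : ℝ) :=
        (Finset.sum_filter_add_sum_filter_not _ _ _).symm
      have hcard_filter : ((Q1.filter (fun K => ¬ a ≤ dd K)).card : ℝ) ≤ (Q1.card : ℝ) := by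
        exact_mod_cast Finset.card_filter_le _ _
      have hnotB : ∑ K ∈ Q1.filter (fun K => ¬ a ≤ dd K), ((dd K : ℕ) : ℝ)
          ≤ (Q1.card : ℝ) * (β*n/2) := by
        have hb : ∀ K ∈ Q1.filter (fun K => ¬ a ≤ dd K), ((dd K : ℕ) : ℝ) ≤ β*n/2 := by
          intro K hK
          have h1 := (Finset.mem_filter.1 hK).2
          have hlt := Nat.lt_ceil.1 (Nat.lt_of_not_le h1)
          linarith
        have h2 := Finset.sum_le_card_nsmul (Q1.filter (fun K => ¬ a ≤ dd K))
          (fun K => ((dd K : ℕ) : ℝ)) (β*n/2) hb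
        rw [nsmul_eq_mul] at h2
        have hb2 : (0:ℝ) ≤ β*n/2 := by positivity
        nlinarith
      have hBsum : ∑ K ∈ B1, ((dd K : ℕ) : ℝ) ≤ (B1.card : ℝ) * n := by
        have h2 := Finset.sum_le_card_nsmul B1 (fun K => ((dd K : ℕ) : ℝ)) n
          (fun K _ => hdn K)
        rw [nsmul_eq_mul] at h2
        exact h2
      have hsum1' : β * (n:ℝ)^(p+2) ≤ ∑ K ∈ Q1, ((dd K : ℕ) : ℝ) := hsum1
      have hQn' : (Q1.card : ℝ) * (β*n/2) ≤ (β/2) * (n:ℝ)^(p+2) := by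
        have hpw : (n:ℝ)^(p+2) = (n:ℝ)^(p+1) * n := by ring
        rw [hpw]
        nlinarith [hQ1n]
      have hstep : ((β/2) * (n:ℝ)^(p+1)) * n ≤ (B1.card : ℝ) * n := by
        have e : ((β/2) * (n:ℝ)^(p+1)) * n = (β/2)*(n:ℝ)^(p+2) := by ring
        linarith
      exact le_of_mul_le_mul_right hstep hn0
    -- key binomial estimate
    have key : (β/4)^m * (n.choose m : ℝ) ≤ (a.choose m : ℝ) := by
      have hq : (β/4)*n ≤ ((a+1-m : ℕ):ℝ) := by
        have hcast : ((a+1-m:ℕ):ℝ) = (a:ℝ)+1-m := by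
          rw [Nat.cast_sub (by omega : m ≤ a+1)]
          push_cast; ring
        rw [hcast]
        linarith
      have h1 := chooseRatio a n m
      have h2 : ((β/4)*n)^m ≤ ((a+1-m:ℕ):ℝ)^m :=
        pow_le_pow_left₀ (by positivity) hq m
      have h3 : ((β/4)*n)^m * (n.choose m : ℝ) ≤ (a.choose m : ℝ) * (n:ℝ)^m := by
        have hcn : (0:ℝ) ≤ (n.choose m : ℝ) := by positivity
        nlinarith
      have h4' : ((β/4)*n)^m = (β/4)^m * (n:ℝ)^m := mul_pow _ _ _
      rw [h4'] at h3
      have hnm : (0:ℝ) < (n:ℝ)^m := by positivity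
      nlinarith
    -- select a good m-set T
    have hchsum : (β/2) * (n:ℝ)^(p+1) * (a.choose m : ℝ)
        ≤ ∑ T ∈ W.powersetCard m, ((((W.powersetCard (p+1)).filter
            (fun S : Finset (Fin n) => G.IsClique (S : Set (Fin n)))).filter
            (fun K => ∀ t ∈ T, ∀ x ∈ K, G.Adj t x)).card : ℝ) := by
      set dd : Finset (Fin n) → ℕ := fun K => (W.filter (fun v => ∀ x ∈ K, G.Adj v x)).card with hdd
      set Q1 := (W.powersetCard (p+1)).filter
        (fun S : Finset (Fin n) => G.IsClique (S : Set (Fin n))) with hQ1def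
      set B1 := Q1.filter (fun K => a ≤ dd K) with hB1def
      have hsb : ∑ K ∈ Q1, ((dd K).choose m : ℝ)
          = ∑ T ∈ W.powersetCard m, ((Q1.filter (fun K => ∀ t ∈ T, ∀ x ∈ K, G.Adj t x)).card : ℝ) := by
        exact_mod_cast congrArg (Nat.cast : ℕ → ℝ) (sumB G W (p+1) m)
      rw [← hsb]
      have h1 : ∑ K ∈ B1, ((dd K).choose m : ℝ) ≤ ∑ K ∈ Q1, ((dd K).choose m : ℝ) := by
        apply Finset.sum_le_sum_of_subset_of_nonneg (Finset.filter_subset _ _)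
        intro K _ _; positivity
      have h2 : (B1.card : ℝ) * (a.choose m : ℝ) ≤ ∑ K ∈ B1, ((dd K).choose m : ℝ) := by
        have := Finset.card_nsmul_le_sum B1 (fun K => ((dd K).choose m : ℝ)) ((a.choose m : ℝ))
          (fun K hK => by
            have hKa := (Finset.mem_filter.1 hK).2
            exact Nat.cast_le.2 (Nat.choose_le_choose m hKa))
        rw [nsmul_eq_mul] at this
        exact this
      have hacm : (0:ℝ) ≤ (a.choose m : ℝ) := by positivity
      nlinarith [hB1]
    have hsum_cast : ∀ T : Finset (Fin n), (0:ℝ) ≤ ((((W.powersetCard (p+1)).filter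
            (fun S : Finset (Fin n) => G.IsClique (S : Set (Fin n)))).filter
            (fun K => ∀ t ∈ T, ∀ x ∈ K, G.Adj t x)).card : ℝ) := fun T => by positivity
    have hacpos : (0:ℝ) < (a.choose m : ℝ) := by exact_mod_cast Nat.choose_pos hma
    have hsne : (W.powersetCard m).Nonempty := by
      by_contra hne
      rw [Finset.not_nonempty_iff_eq_empty] at hne
      rw [hne, Finset.sum_empty] at hchsum
      have hpos : (0:ℝ) < β / 2 * (n:ℝ)^(p+1) * (a.choose m : ℝ) :=
        mul_pos (mul_pos (by linarith) (pow_pos hn0 (p+1))) hacpos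
      linarith
    have hex : ∃ T ∈ W.powersetCard m, (β/2)*(β/4)^m * (n:ℝ)^(p+1)
        ≤ ((((W.powersetCard (p+1)).filter
            (fun S : Finset (Fin n) => G.IsClique (S : Set (Fin n)))).filter
            (fun K => ∀ t ∈ T, ∀ x ∈ K, G.Adj t x)).card : ℝ) := by
      apply Finset.exists_le_of_sum_le hsne
      have hcardW : ((W.powersetCard m).card : ℝ) ≤ (n.choose m : ℝ) := by
        rw [Finset.card_powersetCard]
        exact_mod_cast Nat.choose_le_choose m (by exact_mod_cast hWn)
      have hconst : ∑ _T ∈ W.powersetCard m, ((β/2)*(β/4)^m * (n:ℝ)^(p+1))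
          = ((W.powersetCard m).card : ℝ) * ((β/2)*(β/4)^m * (n:ℝ)^(p+1)) := by
        rw [Finset.sum_const, nsmul_eq_mul]
      rw [hconst]
      have hc1 : (0:ℝ) ≤ (β/2)*(β/4)^m * (n:ℝ)^(p+1) := by positivity
      have hkey2 : ((W.powersetCard m).card : ℝ) * ((β/2)*(β/4)^m * (n:ℝ)^(p+1))
          ≤ (β/2) * (n:ℝ)^(p+1) * (a.choose m : ℝ) := by
        have e1 : ((W.powersetCard m).card : ℝ) * ((β/2)*(β/4)^m * (n:ℝ)^(p+1))
            ≤ (n.choose m : ℝ) * ((β/2)*(β/4)^m * (n:ℝ)^(p+1)) :=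
          mul_le_mul_of_nonneg_right hcardW hc1
        have e2 : (n.choose m : ℝ) * ((β/2)*(β/4)^m * (n:ℝ)^(p+1))
            = ((β/2) * (n:ℝ)^(p+1)) * ((β/4)^m * (n.choose m : ℝ)) := by ring
        have e3 : ((β/2) * (n:ℝ)^(p+1)) * ((β/4)^m * (n.choose m : ℝ))
            ≤ ((β/2) * (n:ℝ)^(p+1)) * (a.choose m : ℝ) := by
          apply mul_le_mul_of_nonneg_left key
          positivity
        calc ((W.powersetCard m).card : ℝ) * ((β/2)*(β/4)^m * (n:ℝ)^(p+1))
            ≤ (n.choose m : ℝ) * ((β/2)*(β/4)^m * (n:ℝ)^(p+1)) := e1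
          _ = ((β/2) * (n:ℝ)^(p+1)) * ((β/4)^m * (n.choose m : ℝ)) := e2
          _ ≤ ((β/2) * (n:ℝ)^(p+1)) * (a.choose m : ℝ) := e3
          _ = (β/2) * (n:ℝ)^(p+1) * (a.choose m : ℝ) := by ring
      exact le_trans hkey2 hchsum
    obtain ⟨T, hTmem, hTbig⟩ := hex
    obtain ⟨hTW, hTcard⟩ := Finset.mem_powersetCard.1 hTmem
    -- common neighbourhood of T
    have hcnt' : ((((W.powersetCard (p+1)).filter
            (fun S : Finset (Fin n) => G.IsClique (S : Set (Fin n)))).filter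
            (fun K => ∀ t ∈ T, ∀ x ∈ K, G.Adj t x)).card : ℝ)
        ≤ (cnt G (p+1) (W.filter (fun v => ∀ t ∈ T, G.Adj v t)) : ℝ) := by
      have hsub : ((W.powersetCard (p+1)).filter
            (fun S : Finset (Fin n) => G.IsClique (S : Set (Fin n)))).filter
            (fun K => ∀ t ∈ T, ∀ x ∈ K, G.Adj t x)
          ⊆ ((W.filter (fun v => ∀ t ∈ T, G.Adj v t)).powersetCard (p+1)).filter
            (fun S : Finset (Fin n) => G.IsClique (S : Set (Fin n))) := by
        intro K hK
        simp only [Finset.mem_filter, Finset.mem_powersetCard] at hK ⊢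
        obtain ⟨⟨⟨hKW, hKcard⟩, hKcl⟩, hj⟩ := hK
        refine ⟨⟨?_, hKcard⟩, hKcl⟩
        intro x hx
        exact Finset.mem_filter.2 ⟨hKW hx, fun t ht => (hj t ht x hx).symm⟩
      exact_mod_cast Finset.card_le_card hsub
    -- apply the induction hypothesis
    have hβ'0 : 0 < β/2*(β/4)^m := by positivity
    have hβ'1 : β/2*(β/4)^m ≤ 1 := by
      have h1 : (β/4)^m ≤ 1 := pow_le_one₀ hb4.le hb41
      nlinarith
    have h4' : 4 * (m:ℝ) ≤ ((β/2*(β/4)^m)/4)^((m+2)^p) * n := by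
      have e1 : (β/4)^(m+2) ≤ (β/2*(β/4)^m)/4 := by
        have he : (β/4)^(m+2) = (β/4)^m * (β/4)^2 := by ring
        have he2 : (β/2*(β/4)^m)/4 = (β/4)^m * (β/8) := by ring
        rw [he, he2]
        apply mul_le_mul_of_nonneg_left _ (by positivity)
        nlinarith
      have e2 : (β/4)^((m+2)^(p+1)) ≤ ((β/2*(β/4)^m)/4)^((m+2)^p) := by
        have e3 : (β/4)^((m+2)^(p+1)) = ((β/4)^(m+2))^((m+2)^p) := by
          rw [← pow_mul]
          congr 1
          rw [pow_succ]
          ring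
        rw [e3]
        exact pow_le_pow_left₀ (by positivity) e1 _
      have := mul_le_mul_of_nonneg_right e2 hnn
      linarith
    have hc' : (β/2*(β/4)^m) * (n:ℝ)^(p+1)
        ≤ (cnt G (p+1) (W.filter (fun v => ∀ t ∈ T, G.Adj v t)) : ℝ) :=
      le_trans (by linarith [hTbig]) hcnt'
    obtain ⟨A', hA'W, hA'card, hA'cross⟩ :=
      ih G (W.filter (fun v => ∀ t ∈ T, G.Adj v t)) (β/2*(β/4)^m) m hβ'0 hβ'1 hm1 h4' hc'
    -- assemble
    refine ⟨Fin.cons T A', ?_, ?_, ?_⟩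
    · intro i
      refine Fin.cases ?_ ?_ i
      · simpa using hTW
      · intro i'
        simpa using (hA'W i').trans (Finset.filter_subset _ _)
    · intro i
      refine Fin.cases ?_ ?_ i
      · simpa using hTcard
      · intro i'
        simpa using hA'card i'
    · intro i j hij x hx y hy
      obtain rfl | ⟨i', rfl⟩ := i.eq_zero_or_eq_succ <;>
        obtain rfl | ⟨j', rfl⟩ := j.eq_zero_or_eq_succ
      · exact absurd rfl hij
      · simp only [Fin.cons_zero, Fin.cons_succ] at hx hy
        have hyW := hA'W j' hy
        exact ((Finset.mem_filter.1 hyW).2 x hx).symm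
      · simp only [Fin.cons_zero, Fin.cons_succ] at hx hy
        have hxW := hA'W i' hx
        exact (Finset.mem_filter.1 hxW).2 y hy
      · simp only [Fin.cons_succ] at hx hy
        exact hA'cross i' j' (fun h => hij (by rw [h])) x hx y hy

set_option maxHeartbeats 1000000 in
theorem stmt13 (r : ℕ) (hr : 2 ≤ r) (ε : ℝ) (hε : 0 < ε) :
    ∃ δ : ℝ, 0 < δ ∧ ∃ N : ℕ, ∀ n ≥ N,
      ∀ G : SimpleGraph (Fin n),
        (ε * (n:ℝ)^r ≤ (Nat.card {S : Finset (Fin n) // G.IsNClique r S} : ℝ)) →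
        Contains (SimpleGraph.completeMultipartiteGraph
            fun _ : Fin r => Fin ⌊δ * (Real.log n)^(1/((r:ℝ)-1))⌋₊) G := by
  classical
  obtain ⟨q, rfl⟩ : ∃ q, r = q + 2 := ⟨r - 2, by omega⟩
  set β : ℝ := min ε 1 with hβ
  have hβ0 : 0 < β := lt_min hε one_pos
  have hβ1 : β ≤ 1 := min_le_right _ _
  have hβε : β ≤ ε := min_le_left _ _
  have h4β : (4:ℝ) ≤ 4/β := by
    rw [le_div_iff₀ hβ0]; nlinarith
  set K : ℝ := Real.log (4/β) with hK
  have hK0 : 0 < K := Real.log_pos (by linarith)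
  set δ : ℝ := 1/(4*(K+1)) with hδ
  have hδ0 : 0 < δ := by positivity
  refine ⟨δ, hδ0, ?_⟩
  set s : ℕ := q + 1 with hs
  have hsR : 0 < (s:ℝ) := by positivity
  set T0 : ℝ := (2/δ)^s + 64*δ + 1 with hT0
  have hT0pos : 1 ≤ T0 := by
    have h1 : (0:ℝ) ≤ (2/δ)^s := by positivity
    have h2 : (0:ℝ) ≤ 64*δ := by positivity
    rw [hT0]; linarith
  refine ⟨⌈Real.exp T0⌉₊ + 1, ?_⟩
  intro n hn G hG
  have hnR : Real.exp T0 ≤ n := by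
    have h1 : Real.exp T0 ≤ (⌈Real.exp T0⌉₊ : ℝ) := Nat.le_ceil _
    have h2 : ((⌈Real.exp T0⌉₊ + 1 : ℕ) : ℝ) ≤ n := Nat.cast_le.2 hn
    push_cast at h2; linarith
  have hn0 : (0:ℝ) < n := lt_of_lt_of_le (Real.exp_pos _) hnR
  set t : ℝ := Real.log n with ht
  have htT : T0 ≤ t := by
    have := Real.log_le_log (Real.exp_pos T0) hnR
    rwa [Real.log_exp] at this
  have ht1 : 1 ≤ t := le_trans hT0pos htT
  have ht0 : (0:ℝ) ≤ t := by linarith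
  have hnt : (n:ℝ) = Real.exp t := (Real.exp_log hn0).symm
  set L : ℝ := t ^ (1/(s:ℝ)) with hL
  have hL0 : 0 ≤ L := Real.rpow_nonneg ht0 _
  set m : ℕ := ⌊δ * (Real.log (n:ℝ))^(1/(((q+2:ℕ):ℝ)-1))⌋₊ with hm
  have hmdef : m = ⌊δ * L⌋₊ := by
    rw [hm]
    congr 1
    rw [← ht, hL]
    congr 2
    push_cast
    rw [hs]; push_cast; ring
  have hmL : (m:ℝ) ≤ δ * L := by
    rw [hmdef]
    exact Nat.floor_le (by positivity)
  -- L is large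
  have hLlb : 2/δ ≤ L := by
    have hA : ((2/δ)^s : ℝ) ≤ T0 := by
      have h2 : (0:ℝ) ≤ 64*δ := by positivity
      rw [hT0]; linarith
    have h1 : ((2/δ)^s : ℝ) ≤ t := le_trans hA htT
    have h2 : (((2/δ)^s : ℝ)) ^ (1/(s:ℝ)) ≤ t ^ (1/(s:ℝ)) :=
      Real.rpow_le_rpow (by positivity) h1 (by positivity)
    have h3 : (((2/δ)^s : ℝ)) ^ (1/(s:ℝ)) = 2/δ := by
      rw [← Real.rpow_natCast (2/δ) s, ← Real.rpow_mul (by positivity)]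
      rw [show (s:ℝ) * (1/(s:ℝ)) = 1 by field_simp]
      exact Real.rpow_one _
    rw [h3] at h2
    exact h2
  have hδL2 : 2 ≤ δ * L := by
    have := mul_le_mul_of_nonneg_left hLlb hδ0.le
    have e : δ * (2/δ) = 2 := by field_simp
    linarith [e ▸ this]
  have hm2 : (m:ℝ) + 2 ≤ 2*(δ*L) := by linarith
  have hLs : L^(s:ℕ) = t := by
    rw [hL, ← Real.rpow_natCast (t ^ (1/(s:ℝ))) s, ← Real.rpow_mul ht0]
    rw [show (1/(s:ℝ)) * (s:ℝ) = 1 by field_simp]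
    exact Real.rpow_one _
  have h2δ1 : 2*δ ≤ 1 := by
    have hK1 : (0:ℝ) < 4*(K+1) := by positivity
    rw [hδ, mul_one_div, div_le_one hK1]
    linarith
  have hEst : (((m+2)^s : ℕ) : ℝ) * K ≤ t/2 := by
    have e1 : (((m+2)^s : ℕ) : ℝ) = ((m:ℝ)+2)^s := by push_cast; ring
    have e2 : ((m:ℝ)+2)^s ≤ (2*(δ*L))^s := pow_le_pow_left₀ (by positivity) hm2 s
    have e3 : (2*(δ*L))^s = (2*δ)^s * L^s := by
      rw [show (2:ℝ)*(δ*L) = (2*δ)*L by ring, mul_pow]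
    have e4 : (2*δ)^s ≤ 2*δ := pow_le_of_le_one (by positivity) h2δ1 (by omega)
    have e5 : (2*δ)*K ≤ 1/2 := by
      have hne : K + 1 ≠ 0 := by positivity
      have hexp : 4*(δ*K) + 4*δ = 1 := by
        rw [hδ]; field_simp
      linarith
    have hLsK : L^(s:ℕ) = t := hLs
    have e6 : ((m:ℝ)+2)^s * K ≤ ((2*δ) * t) * K := by
      have : (2*(δ*L))^s ≤ (2*δ) * t := by
        rw [e3, hLsK]
        exact mul_le_mul_of_nonneg_right e4 ht0
      nlinarith [pow_nonneg (by positivity : (0:ℝ) ≤ (m:ℝ)+2) s]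
    rw [e1]
    nlinarith
  have h4m : 4*(m:ℝ) ≤ Real.exp (t/2) := by
    have hLt : L ≤ t := by
      have h1 : t ^ (1/(s:ℝ)) ≤ t ^ (1:ℝ) :=
        Real.rpow_le_rpow_of_exponent_le ht1 (by
          rw [div_le_one hsR]
          exact_mod_cast Nat.one_le_iff_ne_zero.2 (by omega))
      rw [Real.rpow_one] at h1
      exact h1
    have hmδt : (m:ℝ) ≤ δ * t := le_trans hmL (by nlinarith)
    have hexp : t/4 + 1 ≤ Real.exp (t/4) := Real.add_one_le_exp _
    have hsq : Real.exp (t/2) = Real.exp (t/4) * Real.exp (t/4) := by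
      rw [← Real.exp_add]; ring_nf
    have hδ64 : 64*δ ≤ t := by
      have : (0:ℝ) ≤ (2/δ)^s := by positivity
      rw [hT0] at htT; linarith
    nlinarith [Real.exp_pos (t/4)]
  have hmain : 4*(m:ℝ) ≤ (β/4)^((m+2)^s) * n := by
    have hβ4K : (β/4 : ℝ) = Real.exp (-K) := by
      rw [hK, ← Real.log_inv, Real.exp_log (by positivity)]
      rw [inv_div]
    have e1 : ((β/4):ℝ)^((m+2)^s) = Real.exp (-(((m+2)^s : ℕ):ℝ) * K) := by
      rw [hβ4K, ← Real.exp_nat_mul]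
      congr 1
      ring
    rw [e1, hnt, ← Real.exp_add]
    have : t/2 ≤ -(((m+2)^s : ℕ):ℝ) * K + t := by linarith [hEst]
    calc 4*(m:ℝ) ≤ Real.exp (t/2) := h4m
      _ ≤ Real.exp (-(((m+2)^s : ℕ):ℝ) * K + t) := Real.exp_le_exp.2 this
  -- dispose of the trivial case m = 0
  rcases Nat.eq_zero_or_pos m with hm0 | hm1
  · exact ⟨⟨fun x => (Fin.cast hm0 x.2).elim0,
      fun {x y} h => (Fin.cast hm0 x.2).elim0⟩,
      fun x => (Fin.cast hm0 x.2).elim0⟩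
  -- clique count in `cnt` form
  have hcard : (Nat.card {S : Finset (Fin n) // G.IsNClique (q+2) S} : ℝ)
      ≤ (cnt G (q+2) (Finset.univ : Finset (Fin n)) : ℝ) := by
    have h1 : Nat.card {S : Finset (Fin n) // G.IsNClique (q+2) S}
        = (Finset.univ.filter (fun S : Finset (Fin n) => G.IsNClique (q+2) S)).card := by
      rw [Nat.card_eq_fintype_card]
      exact Fintype.card_subtype _
    have h2 : (Finset.univ.filter (fun S : Finset (Fin n) => G.IsNClique (q+2) S))
        = ((Finset.univ : Finset (Fin n)).powersetCard (q+2)).filter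
            (fun S : Finset (Fin n) => G.IsClique (S : Set (Fin n))) := by
      ext S
      simp only [Finset.mem_filter, Finset.mem_powersetCard, Finset.mem_univ, true_and,
        Finset.subset_univ, SimpleGraph.isNClique_iff]
      tauto
    rw [h1, h2]
    exact le_refl _
  have hcount : β * (n:ℝ)^(q+1+1) ≤ (cnt G (q+1+1) (Finset.univ : Finset (Fin n)) : ℝ) := by
    have h1 : β * (n:ℝ)^(q+2) ≤ ε * (n:ℝ)^(q+2) := by
      apply mul_le_mul_of_nonneg_right hβε (by positivity)
    exact le_trans (le_trans h1 hG) hcard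
  obtain ⟨A, hAW, hAcard, hAcross⟩ :=
    core (q+1) G Finset.univ β m hβ0 hβ1 hm1 hmain hcount
  -- build the embedding
  refine ⟨⟨fun x => (A x.1).orderEmbOfFin (hAcard x.1) x.2, ?_⟩, ?_⟩
  · intro x y hxy
    simp only [comap_adj, top_adj] at hxy
    exact hAcross x.1 y.1 hxy _ (Finset.orderEmbOfFin_mem _ _ _) _
      (Finset.orderEmbOfFin_mem _ _ _)
  · intro x y hxy
    by_cases h1 : x.1 = y.1
    · obtain ⟨i, k⟩ := x
      obtain ⟨j, l⟩ := y
      obtain rfl : i = j := h1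
      have h2 : k = l := ((A i).orderEmbOfFin (hAcard i)).injective hxy
      subst h2
      rfl
    · exfalso
      have hadj : G.Adj ((A x.1).orderEmbOfFin (hAcard x.1) x.2)
          ((A y.1).orderEmbOfFin (hAcard y.1) y.2) :=
        hAcross x.1 y.1 h1 _ (Finset.orderEmbOfFin_mem _ _ _) _
          (Finset.orderEmbOfFin_mem _ _ _)
      exact G.ne_of_adj hadj hxy
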